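/- Let d : Fin T → ℕ. For each t, let N_t = |{s : t ≤ s + d(s) < t + d(t)}| (with s ranging over Fin T). Then ∑_{t} N_t ≤ ∑_t d(t). -/

import Mathlib

open Finset

theorem stability_span_sum_le_total_delay (T : ℕ) (d : Fin T → ℕ) :
    (∑ t : Fin T, (Finset.univ.filter
        (fun s : Fin T => t.val ≤ s.val + d s ∧ s.val + d s < t.val + d t)).card) ≤
      ∑ t : Fin T, d t := by
  classical
  set f : Fin T → ℕ := fun s => s.val + d s with hf
  -- Step 0: swap the roles of t and s
  have swap0 : (∑ t : Fin T, (Finset.univ.filter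
        (fun s : Fin T => t.val ≤ s.val + d s ∧ s.val + d s < t.val + d t)).card)
      = ∑ s : Fin T, (Finset.univ.filter
        (fun t : Fin T => t.val ≤ f s ∧ f s < f t)).card := by
    simp only [Finset.card_filter]
    exact Finset.sum_comm
  rw [swap0]
  set B : Fin T → ℕ := fun s =>
    (Finset.univ.filter (fun t : Fin T => t.val ≤ s.val ∧ f s < f t)).card with hB
  set C : Fin T → ℕ := fun s =>
    (Finset.univ.filter (fun t : Fin T => s.val < t.val ∧ f t ≤ f s)).card with hC
  -- key per-s inequality : N s + C s ≤ d s + B s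
  have key : ∀ s : Fin T,
      (Finset.univ.filter (fun t : Fin T => t.val ≤ f s ∧ f s < f t)).card + C s
        ≤ d s + B s := by
    intro s
    have hsplit : (Finset.univ.filter (fun t : Fin T => t.val ≤ f s ∧ f s < f t))
        = (Finset.univ.filter (fun t : Fin T => t.val ≤ s.val ∧ f s < f t))
          ∪ (Finset.univ.filter
              (fun t : Fin T => s.val < t.val ∧ t.val ≤ f s ∧ f s < f t)) := by
      ext t
      simp only [Finset.mem_filter, Finset.mem_union, Finset.mem_univ, true_and, hf]
      omega
    have hdisj : Disjoint
        (Finset.univ.filter (fun t : Fin T => t.val ≤ s.val ∧ f s < f t))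
        (Finset.univ.filter
            (fun t : Fin T => s.val < t.val ∧ t.val ≤ f s ∧ f s < f t)) := by
      rw [Finset.disjoint_left]
      intro t ht ht'
      simp only [Finset.mem_filter, Finset.mem_univ, true_and] at ht ht'
      omega
    have hcardN : (Finset.univ.filter (fun t : Fin T => t.val ≤ f s ∧ f s < f t)).card
        = B s + (Finset.univ.filter
            (fun t : Fin T => s.val < t.val ∧ t.val ≤ f s ∧ f s < f t)).card := by
      rw [hsplit, Finset.card_union_of_disjoint hdisj]
    -- the two "t > s" sets are disjoint subsets of {t : s < t ≤ f s}
    set D := Finset.univ.filter (fun t : Fin T => s.val < t.val ∧ t.val ≤ f s) with hD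
    have hsub1 : (Finset.univ.filter
        (fun t : Fin T => s.val < t.val ∧ t.val ≤ f s ∧ f s < f t)) ⊆ D := by
      intro t ht
      simp only [hD, Finset.mem_filter, Finset.mem_univ, true_and] at ht ⊢
      omega
    have hsub2 : (Finset.univ.filter (fun t : Fin T => s.val < t.val ∧ f t ≤ f s)) ⊆ D := by
      intro t ht
      simp only [hD, Finset.mem_filter, Finset.mem_univ, true_and, hf] at ht ⊢
      omega
    have hdisj2 : Disjoint
        (Finset.univ.filter (fun t : Fin T => s.val < t.val ∧ t.val ≤ f s ∧ f s < f t))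
        (Finset.univ.filter (fun t : Fin T => s.val < t.val ∧ f t ≤ f s)) := by
      rw [Finset.disjoint_left]
      intro t ht ht'
      simp only [Finset.mem_filter, Finset.mem_univ, true_and] at ht ht'
      omega
    have hDcard : D.card ≤ d s := by
      have h1 : D.card ≤ (Finset.Ioc s.val (s.val + d s)).card := by
        apply Finset.card_le_card_of_injOn Fin.val
        · intro t ht
          simp only [hD, Finset.mem_coe, Finset.mem_filter, Finset.mem_univ, true_and, hf] at ht
          simp only [Finset.mem_coe, Finset.mem_Ioc]
          omega
        · intro a _ b _ h
          exact Fin.val_injective h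
      simpa using h1
    have hsum : (Finset.univ.filter
          (fun t : Fin T => s.val < t.val ∧ t.val ≤ f s ∧ f s < f t)).card + C s
        ≤ D.card := by
      rw [hC]
      rw [← Finset.card_union_of_disjoint hdisj2]
      exact Finset.card_le_card (Finset.union_subset hsub1 hsub2)
    omega
  -- ∑ B ≤ ∑ C
  have hBC : (∑ s : Fin T, B s) ≤ ∑ s : Fin T, C s := by
    have hBsum : (∑ s : Fin T, B s)
        = ∑ x : Fin T, ∑ y : Fin T,
            (if x.val ≤ y.val ∧ f y < f x then 1 else 0) := by
      simp only [hB, Finset.card_filter]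
      exact Finset.sum_comm
    have hCsum : (∑ s : Fin T, C s)
        = ∑ x : Fin T, ∑ y : Fin T,
            (if x.val < y.val ∧ f y ≤ f x then 1 else 0) := by
      simp only [hC, Finset.card_filter]
    rw [hBsum, hCsum]
    apply Finset.sum_le_sum
    intro x _
    apply Finset.sum_le_sum
    intro y _
    by_cases h : x.val ≤ y.val ∧ f y < f x
    · have hne : x.val ≠ y.val := by
        intro e
        have : x = y := Fin.val_injective e
        subst this
        exact absurd h.2 (lt_irrefl _)
      have h2 : x.val < y.val ∧ f y ≤ f x := ⟨by omega, le_of_lt h.2⟩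
      rw [if_pos h, if_pos h2]
    · rw [if_neg h]
      exact Nat.zero_le _
  have total := Finset.sum_le_sum (fun s (_ : s ∈ Finset.univ) => key s)
  rw [Finset.sum_add_distrib, Finset.sum_add_distrib] at total
  omega
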